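/- Let n ≥ 1 and let ψ : ℝ → ℂ be n-times differentiable on ℝ∖{0}. Define the clock Hamiltonian action (Ĥ_Cψ)(p) := s·p²·ψ(p)/2. Then for every p ≠ 0: (T̂ⁿ(Ĥ_Cψ))(p) − (Ĥ_C(T̂ⁿψ))(p) = i·n·(T̂^{n−1}ψ)(p). In particular, for n = 1 the covariant time operator is canonically conjugate to the quadratic clock Hamiltonian: (T̂(Ĥ_Cψ))(p) − (Ĥ_C(T̂ψ))(p) = i·ψ(p), i.e., [T̂, Ĥ_C] = i. -/

import Mathlib

/-- The covariant time operator `(T̂ψ)(p) = i·s·(ψ′(p)/p − ψ(p)/(2p²))` in momentum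
representation (symmetric ordering `(s/2)(t̂ p̂⁻¹ + p̂⁻¹ t̂)`). -/
noncomputable def timeOp (s : ℝ) (ψ : ℝ → ℂ) (p : ℝ) : ℂ :=
  Complex.I * (s : ℂ) * (deriv ψ p / (p : ℂ) - ψ p / (2 * (p : ℂ) ^ 2))

/-- The quadratic clock Hamiltonian `(Ĥ_Cψ)(p) = s·p²·ψ(p)/2` in momentum
representation. -/
noncomputable def clockHam (s : ℝ) (ψ : ℝ → ℂ) (p : ℝ) : ℂ :=
  (s : ℂ) * (p : ℂ) ^ 2 * ψ p / 2

lemma diffAt_of_cd {n : ℕ} {f : ℝ → ℂ} (hf : ContDiffOn ℝ ((n + 1 : ℕ) : ℕ∞) f {(0:ℝ)}ᶜ)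
    {q : ℝ} (hq : q ≠ 0) : DifferentiableAt ℝ f q := by
  exact (hf.differentiableOn (by simp)).differentiableAt
    (isOpen_compl_singleton.mem_nhds (by simpa using hq))

lemma timeOp_congr (s : ℝ) {f g : ℝ → ℂ} (h : ∀ q : ℝ, q ≠ 0 → f q = g q)
    {p : ℝ} (hp : p ≠ 0) : timeOp s f p = timeOp s g p := by
  have hev : f =ᶠ[nhds p] g := by
    filter_upwards [isOpen_compl_singleton.mem_nhds (by simpa using hp)] with q hq
    exact h q hq
  simp only [timeOp, hev.deriv_eq, h p hp]

lemma timeOp_iter_congr (s : ℝ) (n : ℕ) {f g : ℝ → ℂ} (h : ∀ q : ℝ, q ≠ 0 → f q = g q) :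
    ∀ p : ℝ, p ≠ 0 → (timeOp s)^[n] f p = (timeOp s)^[n] g p := by
  induction n generalizing f g with
  | zero => exact h
  | succ n ih =>
    intro p hp
    rw [Function.iterate_succ_apply, Function.iterate_succ_apply]
    exact ih (fun q hq => timeOp_congr s h hq) p hp

lemma timeOp_contDiffOn (s : ℝ) (n : ℕ) {f : ℝ → ℂ}
    (hf : ContDiffOn ℝ ((n + 1 : ℕ) : ℕ∞) f {(0:ℝ)}ᶜ) :
    ContDiffOn ℝ (n : ℕ∞) (timeOp s f) {(0:ℝ)}ᶜ := by
  have hc : ContDiffOn ℝ (n : ℕ∞) (fun p : ℝ => (p : ℂ)) {(0:ℝ)}ᶜ :=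
    Complex.ofRealCLM.contDiff.contDiffOn
  have hne : ∀ x ∈ ({(0:ℝ)}ᶜ : Set ℝ), (x : ℂ) ≠ 0 := fun x hx =>
    Complex.ofReal_ne_zero.mpr (by simpa using hx)
  have hd : ContDiffOn ℝ (n : ℕ∞) (deriv f) {(0:ℝ)}ᶜ :=
    hf.deriv_of_isOpen isOpen_compl_singleton (by exact_mod_cast le_rfl)
  have hfn : ContDiffOn ℝ (n : ℕ∞) f {(0:ℝ)}ᶜ := hf.of_le (by exact_mod_cast Nat.le_succ n)
  have h1 : ContDiffOn ℝ (n : ℕ∞) (fun p : ℝ => deriv f p * ((p : ℂ))⁻¹) {(0:ℝ)}ᶜ :=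
    hd.mul (hc.inv hne)
  have h2 : ContDiffOn ℝ (n : ℕ∞) (fun p : ℝ => f p * (2 * (p : ℂ) ^ 2)⁻¹) {(0:ℝ)}ᶜ :=
    hfn.mul ((contDiffOn_const.mul (hc.pow 2)).inv (fun x hx => by simpa using hne x hx))
  have h3 : ContDiffOn ℝ (n : ℕ∞)
      (fun p : ℝ => Complex.I * (s:ℂ) * (deriv f p * ((p:ℂ))⁻¹ - f p * (2 * (p:ℂ)^2)⁻¹))
      {(0:ℝ)}ᶜ := contDiffOn_const.mul (h1.sub h2)
  exact h3.congr (fun x _ => by simp [timeOp, div_eq_mul_inv])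

lemma clockHam_contDiffOn (s : ℝ) (m : ℕ∞) {f : ℝ → ℂ}
    (hf : ContDiffOn ℝ m f {(0:ℝ)}ᶜ) : ContDiffOn ℝ m (clockHam s f) {(0:ℝ)}ᶜ := by
  have hc : ContDiffOn ℝ m (fun p : ℝ => (p : ℂ)) {(0:ℝ)}ᶜ :=
    Complex.ofRealCLM.contDiff.contDiffOn
  exact ((contDiffOn_const.mul (hc.pow 2)).mul hf).div_const 2

lemma timeOp_add (s : ℝ) {f g : ℝ → ℂ} (c : ℂ) {p : ℝ}
    (hf : DifferentiableAt ℝ f p) (hg : DifferentiableAt ℝ g p) :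
    timeOp s (fun q => f q + c * g q) p = timeOp s f p + c * timeOp s g p := by
  have hder : deriv (fun q => f q + c * g q) p = deriv f p + c * deriv g p := by
    rw [deriv_fun_add hf (hg.const_mul c), deriv_const_mul c hg]
  simp only [timeOp, hder]
  ring

lemma timeOp_iter_add (s : ℝ) (n : ℕ) :
    ∀ (f g : ℝ → ℂ) (c : ℂ), ContDiffOn ℝ (n : ℕ∞) f {(0:ℝ)}ᶜ →
      ContDiffOn ℝ (n : ℕ∞) g {(0:ℝ)}ᶜ → ∀ p : ℝ, p ≠ 0 →
      (timeOp s)^[n] (fun q => f q + c * g q) p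
        = (timeOp s)^[n] f p + c * (timeOp s)^[n] g p := by
  induction n with
  | zero => intro f g c _ _ p _; simp
  | succ n ih =>
    intro f g c hf hg p hp
    rw [Function.iterate_succ_apply, Function.iterate_succ_apply, Function.iterate_succ_apply]
    have hcong : ∀ q : ℝ, q ≠ 0 → timeOp s (fun q => f q + c * g q) q
        = (fun q => timeOp s f q + c * timeOp s g q) q := fun q hq =>
      timeOp_add s c (diffAt_of_cd hf hq) (diffAt_of_cd hg hq)
    rw [timeOp_iter_congr s n hcong p hp]
    exact ih (timeOp s f) (timeOp s g) c (timeOp_contDiffOn s n hf) (timeOp_contDiffOn s n hg) p hp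

lemma base_comm (s : ℝ) (hs : s = 1 ∨ s = -1) (ψ : ℝ → ℂ) (p : ℝ) (hp : p ≠ 0)
    (hd : DifferentiableAt ℝ ψ p) :
    timeOp s (clockHam s ψ) p - clockHam s (timeOp s ψ) p = Complex.I * ψ p := by
  have hpc : (p : ℂ) ≠ 0 := Complex.ofReal_ne_zero.mpr hp
  have hs2 : (s : ℂ) * (s : ℂ) = 1 := by
    rcases hs with h | h <;> simp [h]
  have h1 : HasDerivAt (fun q : ℝ => (q : ℂ)) 1 p := by
    simpa using (hasDerivAt_id p).ofReal_comp
  have h2 : HasDerivAt (fun q : ℝ => (q : ℂ) ^ 2) (2 * (p:ℂ)) p := by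
    simpa [pow_two, two_mul] using h1.fun_mul h1
  have hH : HasDerivAt (clockHam s ψ)
      (((s:ℂ) * (2 * (p:ℂ)) * ψ p + (s:ℂ) * (p:ℂ)^2 * deriv ψ p) / 2) p := by
    exact (((h2.const_mul ((s:ℂ))).mul hd.hasDerivAt).div_const 2)
  have hderivH : deriv (clockHam s ψ) p
      = ((s:ℂ) * (2 * (p:ℂ)) * ψ p + (s:ℂ) * (p:ℂ)^2 * deriv ψ p) / 2 := hH.deriv
  simp only [timeOp, clockHam, hderivH]
  field_simp
  ring_nf
  rw [show ((s:ℂ))^2 = 1 by rw [sq]; exact hs2]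
  field_simp

lemma key_comm (s : ℝ) (hs : s = 1 ∨ s = -1) :
    ∀ n : ℕ, ∀ ψ : ℝ → ℂ, ContDiffOn ℝ ((n + 1 : ℕ) : ℕ∞) ψ {(0:ℝ)}ᶜ →
      ∀ p : ℝ, p ≠ 0 →
      (timeOp s)^[n + 1] (clockHam s ψ) p - clockHam s ((timeOp s)^[n + 1] ψ) p
        = Complex.I * ((n + 1 : ℕ) : ℂ) * (timeOp s)^[n] ψ p := by
  intro n
  induction n with
  | zero =>
    intro ψ hψ p hp
    simpa using base_comm s hs ψ p hp (diffAt_of_cd hψ hp)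
  | succ n ih =>
    intro ψ hψ p hp
    have hTψ : ContDiffOn ℝ ((n + 1 : ℕ) : ℕ∞) (timeOp s ψ) {(0:ℝ)}ᶜ :=
      timeOp_contDiffOn s (n + 1) hψ
    have hψn : ContDiffOn ℝ ((n + 1 : ℕ) : ℕ∞) ψ {(0:ℝ)}ᶜ :=
      hψ.of_le (by exact_mod_cast Nat.le_succ (n + 1))
    rw [Function.iterate_succ_apply]
    have hcongr : ∀ q : ℝ, q ≠ 0 → timeOp s (clockHam s ψ) q
        = (fun q => clockHam s (timeOp s ψ) q + Complex.I * ψ q) q := by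
      intro q hq
      have h := base_comm s hs ψ q hq (diffAt_of_cd hψ hq)
      simp only
      linear_combination h
    rw [timeOp_iter_congr s (n + 1) hcongr p hp]
    rw [timeOp_iter_add s (n + 1) _ _ Complex.I (clockHam_contDiffOn s _ hTψ) hψn p hp]
    have hih := ih (timeOp s ψ) hTψ p hp
    rw [← Function.iterate_succ_apply, ← Function.iterate_succ_apply] at hih
    push_cast at hih ⊢
    linear_combination hih

/-- The covariant time operator is canonically conjugate to the quadratic clock
Hamiltonian:  `[T̂ⁿ, Ĥ_C] = i·n·T̂ⁿ⁻¹` pointwise on `ℝ∖{0}`, and in particular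
`[T̂, Ĥ_C] = i`. -/
theorem timeOp_pow_clockHam_commutator
    (s : ℝ) (hs : s = 1 ∨ s = -1) (n : ℕ) (hn : 1 ≤ n) (ψ : ℝ → ℂ)
    (hψ : ContDiffOn ℝ (n : ℕ∞) ψ {(0 : ℝ)}ᶜ) :
    (∀ p : ℝ, p ≠ 0 →
      (timeOp s)^[n] (clockHam s ψ) p - clockHam s ((timeOp s)^[n] ψ) p
        = Complex.I * (n : ℂ) * (timeOp s)^[n - 1] ψ p) ∧
    (∀ ψ' : ℝ → ℂ, (∀ p : ℝ, p ≠ 0 → DifferentiableAt ℝ ψ' p) → ∀ p : ℝ, p ≠ 0 →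
      timeOp s (clockHam s ψ') p - clockHam s (timeOp s ψ') p = Complex.I * ψ' p) := by
  constructor
  · obtain ⟨m, rfl⟩ : ∃ m, n = m + 1 := ⟨n - 1, (Nat.succ_pred_eq_of_pos hn).symm⟩
    intro p hp
    simpa using key_comm s hs m ψ hψ p hp
  · intro ψ' hψ' p hp
    exact base_comm s hs ψ' p hp (hψ' p hp)
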